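/- For fixed integers 1 ≤ l < n and N = n + 2q, the quantity ((q+n-l-1)^{n-l-1} · q! · (q+l)! / N!) · C(2q+l+1, q+l+1) is bounded above by a constant (depending only on n and l) times (1/(q+l+1)) · ((q+n-l-1)/(2q+l+2))^{n-l-1}, and hence tends to 0 as q → ∞. -/
import Mathlib


open Filter

lemma stmt_13_key (n l : ℕ) (hl : 1 ≤ l) (hln : l < n) (q : ℕ) :
    (((q + n - l - 1 : ℕ) ^ (n - l - 1) : ℝ) * q.factorial * (q + l).factorial /
        (n + 2 * q).factorial) * ((2 * q + l + 1).choose (q + l + 1)) ≤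
      1 * (1 / (q + l + 1 : ℝ)) *
        (((q + n - l - 1 : ℕ) : ℝ) / (2 * q + l + 2)) ^ (n - l - 1) := by
  set m := n - l - 1 with hm
  have hnat : (2*q+l+1).choose (q+l+1) * q.factorial * (q+l).factorial *
      ((q+l+1) * (2*q+l+2)^m) ≤ (n+2*q).factorial := by
    have h1 : (2*q+l+1).choose (q+l+1) * (q+l+1).factorial * q.factorial
        = (2*q+l+1).factorial := by
      have h := Nat.choose_mul_factorial_mul_factorial (show q+l+1 ≤ 2*q+l+1 by omega)
      have h2 : 2*q+l+1 - (q+l+1) = q := by omega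
      rwa [h2] at h
    have h3 : (2*q+l+1).factorial * (2*q+l+2)^m ≤ (2*q+l+1+m).factorial :=
      Nat.factorial_mul_pow_le_factorial
    have h4 : 2*q+l+1+m = n+2*q := by omega
    calc (2*q+l+1).choose (q+l+1) * q.factorial * (q+l).factorial *
          ((q+l+1) * (2*q+l+2)^m)
        = ((2*q+l+1).choose (q+l+1) * ((q+l).factorial * (q+l+1)) * q.factorial)
            * (2*q+l+2)^m := by ring
      _ = (2*q+l+1).factorial * (2*q+l+2)^m := by
            rw [show (q+l).factorial * (q+l+1) = (q+l+1).factorial by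
              rw [Nat.factorial_succ]; ring, h1]
      _ ≤ (2*q+l+1+m).factorial := h3
      _ = (n+2*q).factorial := by rw [h4]
  -- now pass to ℝ
  have hNF : (0:ℝ) < ((n + 2*q).factorial : ℕ) := by exact_mod_cast (n+2*q).factorial_pos
  have hY : (0:ℝ) < (q + l + 1 : ℝ) := by positivity
  have hZ : (0:ℝ) < (2 * (q:ℝ) + l + 2) := by positivity
  rw [one_mul, div_pow, div_mul_eq_mul_div, one_div_mul_eq_div, div_div,
    div_le_div_iff₀ hNF (by positivity)]
  have hcast : ((((2*q+l+1).choose (q+l+1) * q.factorial * (q+l).factorial *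
      ((q+l+1) * (2*q+l+2)^m) : ℕ)) : ℝ) ≤ (((n+2*q).factorial : ℕ) : ℝ) :=
    Nat.cast_le.mpr hnat
  calc (((q + n - l - 1 : ℕ) ^ m : ℝ) * q.factorial * (q + l).factorial *
        ((2 * q + l + 1).choose (q + l + 1))) * ((2 * (q:ℝ) + l + 2) ^ m * ((q:ℝ) + l + 1))
      = (((q + n - l - 1 : ℕ) : ℝ) ^ m) *
          (((2*q+l+1).choose (q+l+1) : ℝ) * q.factorial * (q+l).factorial *
            (((q:ℝ)+l+1) * (2*(q:ℝ)+l+2)^m)) := by push_cast; ring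
    _ ≤ (((q + n - l - 1 : ℕ) : ℝ) ^ m) * ((n+2*q).factorial : ℕ) := by
        apply mul_le_mul_of_nonneg_left _ (by positivity)
        calc ((2*q+l+1).choose (q+l+1) : ℝ) * q.factorial * (q+l).factorial *
              (((q:ℝ)+l+1) * (2*(q:ℝ)+l+2)^m)
            = ((2*q+l+1).choose (q+l+1) * q.factorial * (q+l).factorial *
                ((q+l+1) * (2*q+l+2)^m) : ℕ) := by push_cast; ring
          _ ≤ ((n+2*q).factorial : ℕ) := hcast
    _ = (((q + n - l - 1 : ℕ) : ℝ)) ^ m * ((n + 2 * q).factorial : ℕ) := by ring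

/-- For fixed `1 ≤ l < n` and `N = n + 2q`, the quantity
`(q+n-l-1)^(n-l-1)·q!·(q+l)!/N! · C(2q+l+1, q+l+1)` is bounded by a constant (depending
only on `n, l`) times `(1/(q+l+1))·((q+n-l-1)/(2q+l+2))^(n-l-1)`, and tends to `0`. -/
theorem stmt_13 (n l : ℕ) (hl : 1 ≤ l) (hln : l < n) :
    (∃ C : ℝ, 0 < C ∧ ∀ q : ℕ,
      (((q + n - l - 1 : ℕ) ^ (n - l - 1) : ℝ) * q.factorial * (q + l).factorial /
          (n + 2 * q).factorial) * ((2 * q + l + 1).choose (q + l + 1)) ≤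
        C * (1 / (q + l + 1 : ℝ)) *
          (((q + n - l - 1 : ℕ) : ℝ) / (2 * q + l + 2)) ^ (n - l - 1)) ∧
    Tendsto
      (fun q : ℕ =>
        (((q + n - l - 1 : ℕ) ^ (n - l - 1) : ℝ) * q.factorial * (q + l).factorial /
            (n + 2 * q).factorial) * ((2 * q + l + 1).choose (q + l + 1)))
      atTop (nhds 0) := by
  refine ⟨⟨1, one_pos, fun q => stmt_13_key n l hl hln q⟩, ?_⟩
  have hup : Tendsto (fun q : ℕ => 1 / ((q:ℝ) + l + 1)) atTop (nhds 0) := by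
    simp only [one_div]
    exact Tendsto.inv_tendsto_atTop
      (tendsto_atTop_add_const_right _ _
        (tendsto_atTop_add_const_right _ _ tendsto_natCast_atTop_atTop))
  refine tendsto_of_tendsto_of_tendsto_of_le_of_le' tendsto_const_nhds hup
    (Eventually.of_forall fun q => by positivity) ?_
  filter_upwards [eventually_ge_atTop n] with q hq
  have hkey := stmt_13_key n l hl hln q
  have hR : (((q + n - l - 1 : ℕ) : ℝ) / (2 * q + l + 2)) ≤ 1 := by
    rw [div_le_one (by positivity)]
    have : (q + n - l - 1 : ℕ) ≤ 2*q + l + 2 := by omega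
    push_cast
    calc ((q + n - l - 1 : ℕ) : ℝ) ≤ ((2*q + l + 2 : ℕ) : ℝ) := by exact_mod_cast this
      _ = 2 * (q:ℝ) + l + 2 := by push_cast; ring
  have hR0 : (0:ℝ) ≤ (((q + n - l - 1 : ℕ) : ℝ) / (2 * q + l + 2)) := by positivity
  calc (((q + n - l - 1 : ℕ) ^ (n - l - 1) : ℝ) * q.factorial * (q + l).factorial /
          (n + 2 * q).factorial) * ((2 * q + l + 1).choose (q + l + 1))
      ≤ 1 * (1 / (q + l + 1 : ℝ)) *
          (((q + n - l - 1 : ℕ) : ℝ) / (2 * q + l + 2)) ^ (n - l - 1) := hkey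
    _ ≤ 1 * (1 / (q + l + 1 : ℝ)) * 1 := by
        apply mul_le_mul_of_nonneg_left (pow_le_one₀ hR0 hR) (by positivity)
    _ = 1 / ((q:ℝ) + l + 1) := by ring
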